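/- Let α and β be finite nonempty index types and let ρ : Matrix (α × β) (α × β) ℂ be a density matrix. Suppose the partial transpose ρ^{T_B} has eigenvalue 1, i.e. there exists a unit vector v : α × β → ℂ with ρ^{T_B} *ᵥ v = v. Then ρ is a pure product state: there exist unit vectors a : α → ℂ and b : β → ℂ such that ρ((i,j),(k,l)) = a(i)·b(j)·conj(a(k))·conj(b(l)) for all entries. -/

import Mathlib

open Matrix BigOperators ComplexOrder

/-- Partial transpose on the second tensor factor. -/
def ptB {α β : Type*} (M : Matrix (α × β) (α × β) ℂ) : Matrix (α × β) (α × β) ℂ :=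
  fun p q => M (p.1, q.2) (q.1, p.2)

set_option linter.unusedSectionVars false
set_option linter.unusedVariables false

namespace PPTProof

variable {n : Type*} [Fintype n]

lemma psd_two {ρ : Matrix n n ℂ} (hρ : ρ.PosSemidef) (p q : n) (c d : ℂ) :
    0 ≤ ((starRingEnd ℂ) c * ρ p p * c + (starRingEnd ℂ) c * ρ p q * d
        + (starRingEnd ℂ) d * ρ q p * c + (starRingEnd ℂ) d * ρ q q * d).re := by
  classical
  have h := hρ.dotProduct_mulVec_nonneg (c • (Pi.single p 1 : n → ℂ) + d • (Pi.single q 1 : n → ℂ))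
  rw [Complex.le_def] at h
  have h1 : ∀ (e : ℂ) (r : n), star (e • (Pi.single r 1 : n → ℂ)) = (starRingEnd ℂ) e • (Pi.single r 1 : n → ℂ) := by
    intro e r
    funext s
    rcases eq_or_ne s r with h | h <;> simp [h, Pi.single_apply]
  rw [star_add, h1, h1, mulVec_add, Matrix.mulVec_smul, Matrix.mulVec_smul] at h
  simp only [Matrix.mulVec_single_one, Matrix.col_apply, mul_one, add_dotProduct, dotProduct_add,
    smul_dotProduct, dotProduct_smul, single_dotProduct, one_mul,
    smul_eq_mul, Pi.smul_apply, Complex.zero_re] at h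
  convert h.1 using 2
  ring

lemma psd_diag_re {ρ : Matrix n n ℂ} (hρ : ρ.PosSemidef) (p : n) :
    0 ≤ (ρ p p).re := by
  classical
  have := psd_two hρ p p 1 0
  simpa using this

lemma psd_diag_real {ρ : Matrix n n ℂ} (hρ : ρ.PosSemidef) (p : n) :
    ρ p p = ((ρ p p).re : ℂ) := (hρ.1.coe_re_apply_self p).symm

lemma psd_entry_bound {ρ : Matrix n n ℂ} (hρ : ρ.PosSemidef) (p q : n) :
    Complex.normSq (ρ p q) ≤ (ρ p p).re * (ρ q q).re := by
  classical
  set A := (ρ p p).re with hA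
  set C := (ρ q q).re with hC
  have hA0 : 0 ≤ A := psd_diag_re hρ p
  have hC0 : 0 ≤ C := psd_diag_re hρ q
  set b := ρ p q with hb
  have hqp : ρ q p = (starRingEnd ℂ) b := by
    rw [hb, ← hρ.1.apply p q]
    simp [Matrix.conjTranspose_apply]
  have key : ∀ t : ℝ, 0 ≤ t^2 * Complex.normSq b * A - 2 * t * Complex.normSq b + C := by
    intro t
    have h := psd_two hρ p q (-(t:ℂ) * b) 1
    rw [psd_diag_real hρ p, psd_diag_real hρ q, hqp] at h
    have hbb : (starRingEnd ℂ) b * b = (Complex.normSq b : ℂ) := by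
      rw [mul_comm, Complex.mul_conj]
    have e1 : ((starRingEnd ℂ) (-(t:ℂ) * b) * (((ρ p p).re : ℝ) : ℂ) * (-(t:ℂ) * b)
        + (starRingEnd ℂ) (-(t:ℂ) * b) * b * 1
        + (starRingEnd ℂ) 1 * ((starRingEnd ℂ) b) * (-(t:ℂ) * b)
        + (starRingEnd ℂ) 1 * (((ρ q q).re : ℝ) : ℂ) * 1)
        = ((t^2 * Complex.normSq b * A - 2 * t * Complex.normSq b + C : ℝ) : ℂ) := by
      simp only [_root_.map_mul, map_neg, Complex.conj_ofReal, _root_.map_one, one_mul, mul_one,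
        ← hA, ← hC]
      push_cast
      linear_combination ((t:ℂ)^2 * (A:ℂ) - 2*(t:ℂ)) * hbb
    rw [e1, Complex.ofReal_re] at h
    exact h
  rcases eq_or_lt_of_le hA0 with h0 | hpos
  · have hb0 : Complex.normSq b = 0 := by
      by_contra hne
      have hbpos : 0 < Complex.normSq b := lt_of_le_of_ne (Complex.normSq_nonneg b) (Ne.symm hne)
      have := key ((C + 1) / (2 * Complex.normSq b))
      rw [← h0] at this
      set s := Complex.normSq b with hs
      have hss : 0 < s := hbpos
      have h2 : ((C + 1) / (2 * s))^2 * s * 0 - 2 * ((C + 1) / (2 * s)) * s + C = -1 := by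
        field_simp
        ring
      rw [h2] at this
      linarith
    rw [hb0]
    positivity
  · have hkey := key (1 / A)
    have hA' : A ≠ 0 := ne_of_gt hpos
    set s := Complex.normSq b with hs
    have h2 : (1/A)^2 * s * A - 2 * (1/A) * s + C = C - s / A := by
      field_simp
      ring
    rw [h2] at hkey
    have : s / A ≤ C := by linarith
    calc s = s / A * A := by field_simp
    _ ≤ C * A := by
      apply mul_le_mul_of_nonneg_right this (le_of_lt hpos)
    _ = A * C := mul_comm _ _


variable {α β : Type*} [Fintype α] [Fintype β]

-- reindexing equivalence
def gswap : ((α × β) × (α × β)) ≃ ((α × β) × (α × β)) where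
  toFun x := ((x.1.1, x.2.2), (x.2.1, x.1.2))
  invFun x := ((x.1.1, x.2.2), (x.2.1, x.1.2))
  left_inv x := rfl
  right_inv x := rfl

lemma fro_ptB (ρ : Matrix (α × β) (α × β) ℂ) :
    ∑ p : α × β, ∑ q : α × β, Complex.normSq (ptB ρ p q)
      = ∑ p : α × β, ∑ q : α × β, Complex.normSq (ρ p q) := by
  have h1 : ∀ (M : Matrix (α × β) (α × β) ℂ),
      ∑ p : α × β, ∑ q : α × β, Complex.normSq (M p q)
        = ∑ x : (α × β) × (α × β), Complex.normSq (M x.1 x.2) := by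
    intro M
    rw [← Finset.sum_product']
    rfl
  rw [h1, h1]
  have h2 : ∀ x : (α × β) × (α × β),
      Complex.normSq (ptB ρ x.1 x.2) = Complex.normSq (ρ (gswap x).1 (gswap x).2) := by
    intro x
    rfl
  simp_rw [h2]
  exact Equiv.sum_comp gswap (fun y => Complex.normSq (ρ y.1 y.2))

lemma KI (ρ : Matrix (α × β) (α × β) ℂ) (hρ : ρ.PosSemidef) (htr : ρ.trace = 1)
    (v : α × β → ℂ) (hv : ∑ p, Complex.normSq (v p) = 1)
    (hev : ptB ρ *ᵥ v = v) :
    ∀ p q, ptB ρ p q = v p * (starRingEnd ℂ) (v q) := by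
  have hdiag : ∑ p : α × β, (ρ p p).re = 1 := by
    have h1 : (∑ p : α × β, ρ p p) = 1 := htr
    have := congrArg Complex.re h1
    rw [Complex.re_sum] at this
    simpa using this
  have hK : ∑ p : α × β, ∑ q : α × β, Complex.normSq (ρ p q) ≤ 1 := by
    have h1 : ∑ p : α × β, ∑ q : α × β, Complex.normSq (ρ p q)
        ≤ ∑ p : α × β, ∑ q : α × β, (ρ p p).re * (ρ q q).re := by
      apply Finset.sum_le_sum
      intro p _
      apply Finset.sum_le_sum
      intro q _
      exact psd_entry_bound hρ p q
    calc ∑ p : α × β, ∑ q : α × β, Complex.normSq (ρ p q)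
        ≤ ∑ p : α × β, ∑ q : α × β, (ρ p p).re * (ρ q q).re := h1
      _ = (∑ p : α × β, (ρ p p).re) * (∑ q : α × β, (ρ q q).re) := by
          rw [Finset.sum_mul_sum]
      _ = 1 := by rw [hdiag]; ring
  have hnsq : ∀ z : ℂ, (starRingEnd ℂ) z * z = (Complex.normSq z : ℂ) := fun z => by
    rw [mul_comm, Complex.mul_conj]
  have hcross : (∑ p : α × β, ∑ q : α × β, ptB ρ p q * (starRingEnd ℂ) (v p) * v q) = 1 := by
    have h1 : ∀ p : α × β, ∑ q : α × β, ptB ρ p q * (starRingEnd ℂ) (v p) * v q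
        = (starRingEnd ℂ) (v p) * v p := by
      intro p
      have h2 : ∑ q : α × β, ptB ρ p q * (starRingEnd ℂ) (v p) * v q
          = (starRingEnd ℂ) (v p) * ∑ q : α × β, ptB ρ p q * v q := by
        rw [Finset.mul_sum]; congr 1; funext q; ring
      rw [h2]
      have h3 : ∑ q : α × β, ptB ρ p q * v q = v p := by
        have := congrFun hev p
        simpa [Matrix.mulVec, dotProduct] using this
      rw [h3]
    rw [Finset.sum_congr rfl (fun p _ => h1 p)]
    have h4 : ∀ p : α × β, (starRingEnd ℂ) (v p) * v p = (Complex.normSq (v p) : ℂ) :=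
      fun p => hnsq _
    rw [Finset.sum_congr rfl (fun p _ => h4 p), ← Complex.ofReal_sum]
    rw [hv, Complex.ofReal_one]
  have hsum0 : ∑ p : α × β, ∑ q : α × β,
      Complex.normSq (ptB ρ p q - v p * (starRingEnd ℂ) (v q)) ≤ 0 := by
    have hexp : ∀ p q : α × β, Complex.normSq (ptB ρ p q - v p * (starRingEnd ℂ) (v q))
        = Complex.normSq (ptB ρ p q) + Complex.normSq (v p) * Complex.normSq (v q)
          - 2 * (ptB ρ p q * (starRingEnd ℂ) (v p) * v q).re := by
      intro p q
      have : Complex.normSq (v p * (starRingEnd ℂ) (v q))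
          = Complex.normSq (v p) * Complex.normSq (v q) := by
        rw [Complex.normSq_mul, Complex.normSq_conj]
      rw [← this]
      have h5 : (ptB ρ p q * (starRingEnd ℂ) (v p) * v q)
          = ptB ρ p q * (starRingEnd ℂ) (v p * (starRingEnd ℂ) (v q)) := by
        rw [RingHom.map_mul, Complex.conj_conj]; ring
      rw [h5]
      simp [Complex.normSq_apply, Complex.mul_re, Complex.conj_re, Complex.conj_im]
      ring
    rw [Finset.sum_congr rfl (fun p _ => Finset.sum_congr rfl (fun q _ => hexp p q))]
    have e2 : ∑ p : α × β, ∑ q : α × β, Complex.normSq (v p) * Complex.normSq (v q) = 1 := by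
      rw [← Finset.sum_mul_sum, hv]; norm_num
    have e3 : ∑ p : α × β, ∑ q : α × β, 2 * (ptB ρ p q * (starRingEnd ℂ) (v p) * v q).re = 2 := by
      have h9 : ∑ p : α × β, ∑ q : α × β, 2 * (ptB ρ p q * (starRingEnd ℂ) (v p) * v q).re
          = 2 * ∑ p : α × β, (∑ q : α × β, (ptB ρ p q * (starRingEnd ℂ) (v p) * v q)).re := by
        rw [Finset.mul_sum]
        congr 1
        funext p
        rw [Complex.re_sum, Finset.mul_sum]
      rw [h9, ← Complex.re_sum, hcross]
      norm_num
    have e4 : ∑ p : α × β, ∑ q : α × β,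
        (Complex.normSq (ptB ρ p q) + Complex.normSq (v p) * Complex.normSq (v q)
          - 2 * (ptB ρ p q * (starRingEnd ℂ) (v p) * v q).re)
        = (∑ p : α × β, ∑ q : α × β, Complex.normSq (ptB ρ p q))
          + (∑ p : α × β, ∑ q : α × β, Complex.normSq (v p) * Complex.normSq (v q))
          - ∑ p : α × β, ∑ q : α × β, 2 * (ptB ρ p q * (starRingEnd ℂ) (v p) * v q).re := by
      simp only [Finset.sum_sub_distrib, Finset.sum_add_distrib]
    rw [e4, e2, e3, fro_ptB]
    linarith [hK]
  intro p q
  have hterm : Complex.normSq (ptB ρ p q - v p * (starRingEnd ℂ) (v q)) = 0 := by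
    have hnn : ∀ x ∈ (Finset.univ : Finset (α × β)), ∀ y ∈ (Finset.univ : Finset (α × β)),
        (0:ℝ) ≤ Complex.normSq (ptB ρ x y - v x * (starRingEnd ℂ) (v y)) :=
      fun x _ y _ => Complex.normSq_nonneg _
    have h6 : ∑ p : α × β, ∑ q : α × β,
        Complex.normSq (ptB ρ p q - v p * (starRingEnd ℂ) (v q)) = 0 := by
      have : (0:ℝ) ≤ ∑ p : α × β, ∑ q : α × β,
          Complex.normSq (ptB ρ p q - v p * (starRingEnd ℂ) (v q)) := by
        apply Finset.sum_nonneg; intro x _; apply Finset.sum_nonneg; intro y _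
        exact Complex.normSq_nonneg _
      linarith
    have h7 := (Finset.sum_eq_zero_iff_of_nonneg (fun x _ => Finset.sum_nonneg
        (fun y _ => Complex.normSq_nonneg _))).mp h6 p (Finset.mem_univ p)
    have h8 := (Finset.sum_eq_zero_iff_of_nonneg (fun y _ => Complex.normSq_nonneg _)).mp
        h7 q (Finset.mem_univ q)
    exact h8
  exact sub_eq_zero.mp (Complex.normSq_eq_zero.mp hterm)

section B5
variable {α β : Type*} [Fintype α] [Fintype β]

lemma qf_rearrange (ρ : Matrix (α × β) (α × β) ℂ) (v : α × β → ℂ)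
    (hρv : ∀ i j k l, ρ (i,j) (k,l) = v (i,l) * (starRingEnd ℂ) (v (k,j)))
    (x : α × β → ℂ) :
    star x ⬝ᵥ ρ *ᵥ x
      = ∑ j : β, ∑ l : β, (∑ i : α, (starRingEnd ℂ) (x (i,j)) * v (i,l))
          * (starRingEnd ℂ) (∑ k : α, (starRingEnd ℂ) (x (k,l)) * v (k,j)) := by
  have hC : ∀ l j : β, (starRingEnd ℂ) (∑ k : α, (starRingEnd ℂ) (x (k,l)) * v (k,j))
      = ∑ k : α, x (k,l) * (starRingEnd ℂ) (v (k,j)) := by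
    intro l j
    rw [map_sum]
    congr 1; funext k
    rw [RingHom.map_mul, Complex.conj_conj]
  have lhs1 : star x ⬝ᵥ ρ *ᵥ x
      = ∑ i : α, ∑ j : β, (starRingEnd ℂ) (x (i,j)) * ∑ l : β, v (i,l) *
          (∑ k : α, x (k,l) * (starRingEnd ℂ) (v (k,j))) := by
    rw [dotProduct]
    rw [Fintype.sum_prod_type]
    congr 1; funext i
    congr 1; funext j
    have : (ρ *ᵥ x) (i,j) = ∑ k : α, ∑ l : β, ρ (i,j) (k,l) * x (k,l) := by
      rw [Matrix.mulVec, dotProduct, Fintype.sum_prod_type]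
    rw [this]
    have h2 : ∑ k : α, ∑ l : β, ρ (i,j) (k,l) * x (k,l)
        = ∑ l : β, v (i,l) * (∑ k : α, x (k,l) * (starRingEnd ℂ) (v (k,j))) := by
      rw [Finset.sum_comm]
      congr 1; funext l
      rw [Finset.mul_sum]
      congr 1; funext k
      rw [hρv]
      ring
    rw [h2]
    simp only [Pi.star_apply, RCLike.star_def]
  rw [lhs1]
  simp_rw [hC, Finset.mul_sum, Finset.sum_mul]
  -- now both sides are quadruple sums; reorder
  rw [Finset.sum_comm]
  congr 1; funext j
  rw [Finset.sum_comm]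
  congr 1; funext l
  rw [Finset.sum_comm]
  congr 1; funext k
  congr 1; funext i
  ring

lemma qf_two_rows [DecidableEq β] (ρ : Matrix (α × β) (α × β) ℂ) (hρ : ρ.PosSemidef)
    (v : α × β → ℂ)
    (hρv : ∀ i j k l, ρ (i,j) (k,l) = v (i,l) * (starRingEnd ℂ) (v (k,j)))
    (j₀ l₀ : β) (hjl : j₀ ≠ l₀) (cf ef : α → ℂ) :
    0 ≤ ((fun L => ∑ i : α, (starRingEnd ℂ) (cf i) * v (i,L)) j₀
          * (starRingEnd ℂ) ((fun L => ∑ i : α, (starRingEnd ℂ) (cf i) * v (i,L)) j₀)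
        + (fun L => ∑ i : α, (starRingEnd ℂ) (cf i) * v (i,L)) l₀
          * (starRingEnd ℂ) ((fun L => ∑ i : α, (starRingEnd ℂ) (ef i) * v (i,L)) j₀)
        + (fun L => ∑ i : α, (starRingEnd ℂ) (ef i) * v (i,L)) j₀
          * (starRingEnd ℂ) ((fun L => ∑ i : α, (starRingEnd ℂ) (cf i) * v (i,L)) l₀)
        + (fun L => ∑ i : α, (starRingEnd ℂ) (ef i) * v (i,L)) l₀
          * (starRingEnd ℂ) ((fun L => ∑ i : α, (starRingEnd ℂ) (ef i) * v (i,L)) l₀)).re := by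
  set U : β → ℂ := fun L => ∑ i : α, (starRingEnd ℂ) (cf i) * v (i,L) with hU
  set W : β → ℂ := fun L => ∑ i : α, (starRingEnd ℂ) (ef i) * v (i,L) with hW
  set x : α × β → ℂ := fun r => if r.2 = j₀ then cf r.1 else if r.2 = l₀ then ef r.1 else 0 with hx
  have hF : ∀ j l : β, (∑ i : α, (starRingEnd ℂ) (x (i,j)) * v (i,l))
      = (if j = j₀ then U l else 0) + (if j = l₀ then W l else 0) := by
    intro j l
    rcases eq_or_ne j j₀ with h1 | h1
    · subst h1
      simp only [hx, if_pos rfl, if_neg hjl, hU, if_pos rfl, add_zero]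
      simp [hjl]
    · rcases eq_or_ne j l₀ with h2 | h2
      · subst h2
        simp only [hx, hW]
        simp [h1, Ne.symm hjl]
      · simp only [hx]
        simp [h1, h2]
  have h := hρ.dotProduct_mulVec_nonneg x
  rw [Complex.le_def] at h
  have hq := qf_rearrange ρ v hρv x
  rw [hq] at h
  have hsum : ∑ j : β, ∑ l : β, (∑ i : α, (starRingEnd ℂ) (x (i,j)) * v (i,l))
          * (starRingEnd ℂ) (∑ k : α, (starRingEnd ℂ) (x (k,l)) * v (k,j))
      = U j₀ * (starRingEnd ℂ) (U j₀) + U l₀ * (starRingEnd ℂ) (W j₀)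
        + W j₀ * (starRingEnd ℂ) (U l₀) + W l₀ * (starRingEnd ℂ) (W l₀) := by
    simp_rw [hF]
    simp only [map_add, apply_ite (starRingEnd ℂ), map_zero, add_mul, mul_add, ite_mul, zero_mul,
      mul_ite, mul_zero, Finset.sum_add_distrib, Finset.sum_ite_eq', Finset.mem_univ, if_true,
      zero_add, add_zero, if_neg hjl, if_neg (Ne.symm hjl)]
    ring
  rw [hsum] at h
  exact h.1

lemma rank_one [DecidableEq α] [DecidableEq β] (ρ : Matrix (α × β) (α × β) ℂ)
    (hρ : ρ.PosSemidef) (v : α × β → ℂ)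
    (hρv : ∀ i j k l, ρ (i,j) (k,l) = v (i,l) * (starRingEnd ℂ) (v (k,j))) :
    ∀ i k j l, v (i,l) * v (k,j) = v (i,j) * v (k,l) := by
  intro i k j l
  rcases eq_or_ne j l with rfl | hjl
  · ring
  set a := v (i,j) with hadef
  set b := v (i,l) with hbdef
  set c := v (k,j) with hcdef
  set d := v (k,l) with hddef
  by_cases hac : a = 0 ∧ c = 0
  · rw [hac.1, hac.2]; ring
  · have hm : 0 < Complex.normSq a + Complex.normSq c := by
      rcases not_and_or.mp hac with h | h
      · have : 0 < Complex.normSq a := by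
          rcases lt_or_eq_of_le (Complex.normSq_nonneg a) with h1 | h1
          · exact h1
          · exact absurd (Complex.normSq_eq_zero.mp h1.symm) h
        nlinarith [Complex.normSq_nonneg c]
      · have : 0 < Complex.normSq c := by
          rcases lt_or_eq_of_le (Complex.normSq_nonneg c) with h1 | h1
          · exact h1
          · exact absurd (Complex.normSq_eq_zero.mp h1.symm) h
        nlinarith [Complex.normSq_nonneg a]
    by_contra hne
    set δ : ℂ := c * b - a * d with hδdef
    have hδ : δ ≠ 0 := by
      intro h0
      apply hne
      have := sub_eq_zero.mp h0
      linear_combination this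
    set κ : ℂ := (starRingEnd ℂ) a * b + (starRingEnd ℂ) c * d with hκdef
    set m : ℝ := Complex.normSq a + Complex.normSq c with hmdef
    have heval : ∀ (z1 z2 : ℂ) (L : β),
        (∑ i' : α, (starRingEnd ℂ) ((if i' = i then z1 else 0) + (if i' = k then z2 else 0)) * v (i',L))
          = (starRingEnd ℂ) z1 * v (i,L) + (starRingEnd ℂ) z2 * v (k,L) := by
      intro z1 z2 L
      simp only [map_add, apply_ite (starRingEnd ℂ), map_zero, add_mul, ite_mul, zero_mul,
        Finset.sum_add_distrib, Finset.sum_ite_eq', Finset.mem_univ, if_true]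
    have hineq : ∀ ε : ℝ, 0 ≤ ε^2 * (Complex.normSq δ * Complex.normSq κ)
        - 2 * ε * (m * Complex.normSq δ) := by
      intro ε
      set cf : α → ℂ := fun i' => (if i' = i then (starRingEnd ℂ) c else 0)
        + (if i' = k then -((starRingEnd ℂ) a) else 0) with hcf
      set ef : α → ℂ := fun i' => (if i' = i then -(ε:ℂ) * a * (starRingEnd ℂ) δ else 0)
        + (if i' = k then -(ε:ℂ) * c * (starRingEnd ℂ) δ else 0) with hef
      have h := qf_two_rows ρ hρ v hρv j l hjl cf ef
      simp only [] at h
      rw [heval, heval, heval, heval] at h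
      simp only [map_neg, Complex.conj_conj, RingHom.map_mul, Complex.conj_ofReal] at h
      -- now h : 0 ≤ re of expression in a b c d δ ε
      have hUj : c * v (i, j) + -a * v (k, j) = 0 := by
        rw [← hadef, ← hcdef]; ring
      have hUl : c * v (i, l) + -a * v (k, l) = δ := by
        rw [← hbdef, ← hddef, hδdef]; ring
      have hWj : -(ε:ℂ) * (starRingEnd ℂ) a * δ * v (i, j)
          + -(ε:ℂ) * (starRingEnd ℂ) c * δ * v (k, j) = -(ε:ℂ) * ((m:ℝ):ℂ) * δ := by
        rw [← hadef, ← hcdef, hmdef]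
        push_cast
        rw [← Complex.mul_conj, ← Complex.mul_conj]
        ring
      have hWl : -(ε:ℂ) * (starRingEnd ℂ) a * δ * v (i, l)
          + -(ε:ℂ) * (starRingEnd ℂ) c * δ * v (k, l) = -(ε:ℂ) * κ * δ := by
        rw [← hbdef, ← hddef, hκdef]
        ring
      rw [hUj, hUl, hWj, hWl] at h
      have hδc : δ * (starRingEnd ℂ) δ = ((Complex.normSq δ : ℝ) : ℂ) := Complex.mul_conj δ
      have hκc : κ * (starRingEnd ℂ) κ = ((Complex.normSq κ : ℝ) : ℂ) := Complex.mul_conj κ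
      have hexpr : (0 : ℂ) * (starRingEnd ℂ) (0:ℂ) + δ * (starRingEnd ℂ) (-(ε:ℂ) * ((m:ℝ):ℂ) * δ)
          + (-(ε:ℂ) * ((m:ℝ):ℂ) * δ) * (starRingEnd ℂ) δ
          + (-(ε:ℂ) * κ * δ) * (starRingEnd ℂ) (-(ε:ℂ) * κ * δ)
          = ((ε^2 * (Complex.normSq δ * Complex.normSq κ)
              - 2 * ε * (m * Complex.normSq δ) : ℝ) : ℂ) := by
        simp only [RingHom.map_mul, map_neg, Complex.conj_ofReal, map_zero]
        push_cast
        linear_combination (-2*(ε:ℂ)*(m:ℂ) + (ε:ℂ)^2 * (κ * (starRingEnd ℂ) κ)) * hδc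
          + (ε:ℂ)^2 * ((Complex.normSq δ : ℝ):ℂ) * hκc
      rw [hexpr, Complex.ofReal_re] at h
      exact h
    have hδpos : 0 < Complex.normSq δ := by
      rcases lt_or_eq_of_le (Complex.normSq_nonneg δ) with h1 | h1
      · exact h1
      · exact absurd (Complex.normSq_eq_zero.mp h1.symm) hδ
    have hκ0 : 0 ≤ Complex.normSq κ := Complex.normSq_nonneg κ
    have h1 : 0 < Complex.normSq κ + 1 := by linarith
    set t := m / (Complex.normSq κ + 1) with htdef
    have ht : 0 < t := div_pos hm h1
    have hfin := hineq t
    have h2 : t * Complex.normSq κ < m := by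
      rw [htdef, div_mul_eq_mul_div, div_lt_iff₀ h1]
      nlinarith
    have h3 := mul_lt_mul_of_pos_left h2 (mul_pos ht hδpos)
    nlinarith [mul_pos (mul_pos ht hm) hδpos]


section F
variable [DecidableEq α] [DecidableEq β]

lemma assemble (ρ : Matrix (α × β) (α × β) ℂ)
    (v : α × β → ℂ) (hv : ∑ p, Complex.normSq (v p) = 1)
    (hρv : ∀ i j k l, ρ (i,j) (k,l) = v (i,l) * (starRingEnd ℂ) (v (k,j)))
    (hr : ∀ i k j l, v (i,l) * v (k,j) = v (i,j) * v (k,l)) :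
    ∃ (a : α → ℂ) (b : β → ℂ),
      (∑ i, Complex.normSq (a i) = 1) ∧ (∑ j, Complex.normSq (b j) = 1) ∧
      ∀ i j k l, ρ (i, j) (k, l)
        = a i * b j * (starRingEnd ℂ) (a k) * (starRingEnd ℂ) (b l) := by
  have hvne : ∃ p : α × β, v p ≠ 0 := by
    by_contra hall
    push_neg at hall
    rw [Finset.sum_congr rfl (fun p _ => by rw [hall p, Complex.normSq_zero])] at hv
    simp at hv
  obtain ⟨⟨i₀, j₀⟩, hv0⟩ := hvne
  set S : ℝ := ∑ i : α, Complex.normSq (v (i, j₀)) with hSdef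
  have hS : 0 < S := by
    have h1 : 0 < Complex.normSq (v (i₀, j₀)) := by
      rcases lt_or_eq_of_le (Complex.normSq_nonneg (v (i₀,j₀))) with h | h
      · exact h
      · exact absurd (Complex.normSq_eq_zero.mp h.symm) hv0
    have h2 : Complex.normSq (v (i₀, j₀)) ≤ S :=
      Finset.single_le_sum (fun i _ => Complex.normSq_nonneg (v (i,j₀))) (Finset.mem_univ i₀)
    linarith
  set A : ℝ := Real.sqrt S with hAdef
  have hA : 0 < A := Real.sqrt_pos.mpr hS
  have hA2 : A^2 = S := Real.sq_sqrt hS.le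
  have hAc : ((A:ℝ):ℂ) ≠ 0 := by
    simp only [ne_eq, Complex.ofReal_eq_zero]
    exact ne_of_gt hA
  have hv0c : (starRingEnd ℂ) (v (i₀,j₀)) ≠ 0 := by
    simpa using hv0
  set Sβ : ℝ := ∑ j : β, Complex.normSq (v (i₀, j)) with hSβdef
  have hrel : Complex.normSq (v (i₀,j₀)) = S * Sβ := by
    have h1 : ∀ i j, Complex.normSq (v (i,j)) * Complex.normSq (v (i₀,j₀))
        = Complex.normSq (v (i,j₀)) * Complex.normSq (v (i₀,j)) := by
      intro i j
      have := hr i i₀ j₀ j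
      have h2 := congrArg Complex.normSq this
      rw [Complex.normSq_mul, Complex.normSq_mul] at h2
      linarith [h2]
    have h3 : ∑ p : α × β, Complex.normSq (v p) * Complex.normSq (v (i₀,j₀))
        = ∑ p : α × β, Complex.normSq (v (p.1,j₀)) * Complex.normSq (v (i₀,p.2)) := by
      apply Finset.sum_congr rfl
      intro p _
      exact h1 p.1 p.2
    rw [← Finset.sum_mul, hv, one_mul] at h3
    rw [hSdef, hSβdef, Finset.sum_mul_sum, h3, Fintype.sum_prod_type]
  refine ⟨fun i => v (i,j₀) / ((A:ℝ):ℂ),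
         fun j => (starRingEnd ℂ) (v (i₀,j)) * ((A:ℝ):ℂ) / (starRingEnd ℂ) (v (i₀,j₀)),
         ?_, ?_, ?_⟩
  · have : ∀ i : α, Complex.normSq (v (i,j₀) / ((A:ℝ):ℂ)) = Complex.normSq (v (i,j₀)) / S := by
      intro i
      rw [map_div₀, Complex.normSq_ofReal, ← hA2]
      ring
    rw [Finset.sum_congr rfl (fun i _ => this i), ← Finset.sum_div, ← hSdef,
      div_self (ne_of_gt hS)]
  · have : ∀ j : β, Complex.normSq ((starRingEnd ℂ) (v (i₀,j)) * ((A:ℝ):ℂ) / (starRingEnd ℂ) (v (i₀,j₀)))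
        = Complex.normSq (v (i₀,j)) * S / Complex.normSq (v (i₀,j₀)) := by
      intro j
      rw [map_div₀, Complex.normSq_mul, Complex.normSq_conj, Complex.normSq_conj,
        Complex.normSq_ofReal, ← hA2]
      ring
    have hSβ : 0 < Sβ := by
      have hnv : 0 < Complex.normSq (v (i₀,j₀)) := by
        rcases lt_or_eq_of_le (Complex.normSq_nonneg (v (i₀,j₀))) with h | h
        · exact h
        · exact absurd (Complex.normSq_eq_zero.mp h.symm) hv0
      nlinarith
    rw [Finset.sum_congr rfl (fun j _ => this j), ← Finset.sum_div, ← Finset.sum_mul, ← hSβdef,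
      hrel, mul_comm Sβ S]
    exact div_self (by positivity)
  · intro i j k l
    rw [hρv i j k l]
    have h1 : v (i,l) * v (i₀,j₀) = v (i,j₀) * v (i₀,l) := hr i i₀ j₀ l
    have h2 : v (k,j) * v (i₀,j₀) = v (k,j₀) * v (i₀,j) := hr k i₀ j₀ j
    have h2c := congrArg (starRingEnd ℂ) h2
    simp only [RingHom.map_mul] at h2c
    have e1 : v (i,l) = v (i,j₀) * v (i₀,l) / v (i₀,j₀) := by
      field_simp
      linear_combination h1
    have e2 : (starRingEnd ℂ) (v (k,j))
        = (starRingEnd ℂ) (v (k,j₀)) * (starRingEnd ℂ) (v (i₀,j)) / (starRingEnd ℂ) (v (i₀,j₀)) := by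
      rw [eq_div_iff hv0c]
      linear_combination h2c
    rw [e1, e2]
    simp only [map_div₀, RingHom.map_mul, Complex.conj_conj, Complex.conj_ofReal]
    field_simp

end F
end B5

end PPTProof

theorem stmt4 {α β : Type*} [Fintype α] [Fintype β] [Nonempty α] [Nonempty β]
    (ρ : Matrix (α × β) (α × β) ℂ) (hρ : ρ.PosSemidef) (htr : ρ.trace = 1)
    (v : α × β → ℂ) (hv : ∑ p, Complex.normSq (v p) = 1)
    (hev : ptB ρ *ᵥ v = v) :
    ∃ (a : α → ℂ) (b : β → ℂ),
      (∑ i, Complex.normSq (a i) = 1) ∧ (∑ j, Complex.normSq (b j) = 1) ∧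
      ∀ i j k l, ρ (i, j) (k, l)
        = a i * b j * (starRingEnd ℂ) (a k) * (starRingEnd ℂ) (b l) := by
  classical
  have hρv : ∀ i j k l, ρ (i,j) (k,l) = v (i,l) * (starRingEnd ℂ) (v (k,j)) := by
    intro i j k l
    have h := PPTProof.KI ρ hρ htr v hv hev (i,l) (k,j)
    simpa [ptB] using h
  have hr := PPTProof.rank_one ρ hρ v hρv
  exact PPTProof.assemble ρ v hv hρv hr
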